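/- Let (X,d) be a δ-hyperbolic space and let a, b be isometries of (X,d). (i) If there exists a point x ∈ X such that d(aᵖx, b^q x) > max( d(x,aᵖx), d(x,b^q x) ) + 2δ for all pairs (p,q) of nonzero integers, then a and b generate a free subgroup of the isometry group of (X,d), free on {a,b}. (ii) If there exists x ∈ X such that this inequality holds for all pairs (p,q) of nonzero integers that are not both negative, then the semigroup generated by {a,b} is free. -/

import Mathlib

open Metric Filter Set
open scoped Classical ENNReal

noncomputable section

/-- The Gromov product `(x|y)_w`. -/
def gromovProd {X : Type*} [MetricSpace X] (w x y : X) : ℝ :=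
  (dist w x + dist w y - dist x y) / 2

/-- An arclength-parametrized geodesic segment from `x` to `y`,
defined on `[0, dist x y]`. -/
def IsGeodesicSegment {X : Type*} [MetricSpace X] (f : ℝ → X) (x y : X) : Prop :=
  f 0 = x ∧ f (dist x y) = y ∧
    ∀ s ∈ Set.Icc (0 : ℝ) (dist x y), ∀ t ∈ Set.Icc (0 : ℝ) (dist x y),
      dist (f s) (f t) = |s - t|

/-- A δ-hyperbolic space: a proper geodesic metric space all of whose geodesic
triangles are δ-thin, in the sense that two points having the same image under the
comparison map onto the associated tripod are at distance at most δ.  (Two points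
with the same tripod image lie on two sides issued from a common vertex `x`, at the
same arclength parameter `t ≤ (y|z)_x`.) -/
def IsDeltaHyperbolic (X : Type*) [MetricSpace X] (δ : ℝ) : Prop :=
  ProperSpace X ∧
    (∀ x y : X, ∃ f : ℝ → X, IsGeodesicSegment f x y) ∧
    (∀ x y z : X, ∀ f g : ℝ → X, IsGeodesicSegment f x y → IsGeodesicSegment g x z →
      ∀ t : ℝ, 0 ≤ t → t ≤ gromovProd x y z → dist (f t) (g t) ≤ δ)

/-- A sequence converging to a point of the Gromov boundary: the Gromov products of
pairs of points of the sequence tend to `+∞`. -/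
def IsGromovSeq {X : Type*} [MetricSpace X] (x₀ : X) (u : ℕ → X) : Prop :=
  ∀ C : ℝ, ∃ N : ℕ, ∀ m n : ℕ, N ≤ m → N ≤ n → C ≤ gromovProd x₀ (u m) (u n)

/-- Two Gromov sequences define the same boundary point when their mutual Gromov
products tend to `+∞`. -/
def GromovSeqEquiv {X : Type*} [MetricSpace X] (x₀ : X) (u v : ℕ → X) : Prop :=
  ∀ C : ℝ, ∃ N : ℕ, ∀ m n : ℕ, N ≤ m → N ≤ n → C ≤ gromovProd x₀ (u m) (v n)

/-- The space is non-elementary: its Gromov boundary has at least three points. -/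
def NonElementary (X : Type*) [MetricSpace X] : Prop :=
  ∃ (x₀ : X) (u v w : ℕ → X), IsGromovSeq x₀ u ∧ IsGromovSeq x₀ v ∧ IsGromovSeq x₀ w ∧
    ¬ GromovSeqEquiv x₀ u v ∧ ¬ GromovSeqEquiv x₀ u w ∧ ¬ GromovSeqEquiv x₀ v w

/-- The action of `Γ` on `X` is by isometries. -/
def IsIsometricAction (Γ X : Type*) [Group Γ] [MetricSpace X] [MulAction Γ X] : Prop :=
  ∀ γ : Γ, Isometry fun x : X => γ • x

/-- The action of `Γ` on `X` is proper. -/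
def IsProperAction (Γ X : Type*) [Group Γ] [MetricSpace X] [MulAction Γ X] : Prop :=
  ∀ (x : X) (R : ℝ), {γ : Γ | dist x (γ • x) ≤ R}.Finite

/-- `diam (Γ\X) ≤ D` for the quotient distance `d̄(Γx,Γy) = inf_γ d(x,γy)`. -/
def CodiamLE (Γ X : Type*) [Group Γ] [MetricSpace X] [MulAction Γ X] (D : ℝ) : Prop :=
  ∀ x y : X, sInf {r : ℝ | ∃ γ : Γ, r = dist x (γ • y)} ≤ D

/-- The entropy of `(X,d)` endowed with a proper isometric action of `Γ`, computed with
the orbit counting measure `μ_xΓ = Σ_γ Dirac (γ • x)` (for a cocompact proper action this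
is the common value of the entropies of all invariant measures). -/
def orbitEntropy (Γ : Type*) {X : Type*} [Group Γ] [MetricSpace X] [MulAction Γ X]
    (x : X) : ℝ :=
  liminf (fun R : ℝ => Real.log (Nat.card {γ : Γ // dist x (γ • x) < R}) / R) atTop

/-- The stable (asymptotic) displacement `ℓ(γ) = lim d(x, γⁿ x)/n`
(the limit exists and is independent of `x`; it is expressed here as a `liminf`). -/
def stableDisp {Γ X : Type*} [Group Γ] [MetricSpace X] [MulAction Γ X] (γ : Γ) (x : X) : ℝ :=
  liminf (fun n : ℕ => dist x (γ ^ n • x) / (n : ℝ)) atTop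

/-- The pointwise systole `sys_Γ(x) = inf {d(x,γx) : γ ≠ 1}`. -/
def ptSystole (Γ : Type*) {X : Type*} [Group Γ] [MetricSpace X] [MulAction Γ X] (x : X) : ℝ :=
  sInf {r : ℝ | ∃ γ : Γ, γ ≠ 1 ∧ r = dist x (γ • x)}

/-- The global systole `Sys_Γ(X) = inf_x sys_Γ(x)`. -/
def globSystole (Γ X : Type*) [Group Γ] [MetricSpace X] [MulAction Γ X] : ℝ :=
  sInf {r : ℝ | ∃ x : X, r = ptSystole Γ x}

/-- The distance of `(X,d)` is convex: for any two affinely reparametrized geodesic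
segments `c₁, c₂`, the function `t ↦ d(c₁(t), c₂(t))` is convex on `[0,1]`. -/
def ConvexDist (X : Type*) [MetricSpace X] : Prop :=
  ∀ (x y x' y' : X) (f g : ℝ → X), IsGeodesicSegment f x y → IsGeodesicSegment g x' y' →
    ConvexOn ℝ (Set.Icc (0 : ℝ) 1) fun t => dist (f (t * dist x y)) (g (t * dist x' y'))

/-- `f` is a local geodesic on the set `s ⊆ ℝ`. -/
def IsLocalGeodesic {X : Type*} [MetricSpace X] (f : ℝ → X) (s : Set ℝ) : Prop :=
  ∀ t ∈ s, ∃ ε > (0 : ℝ), ∀ u ∈ s ∩ Set.Ioo (t - ε) (t + ε), ∀ v ∈ s ∩ Set.Ioo (t - ε) (t + ε),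
    dist (f u) (f v) = |u - v|

/-- Every local geodesic defined on a nontrivial segment extends to a local geodesic
defined on all of `ℝ`. -/
def GeodesicallyComplete (X : Type*) [MetricSpace X] : Prop :=
  ∀ (a b : ℝ), a < b → ∀ f : ℝ → X, IsLocalGeodesic f (Set.Icc a b) →
    ∃ g : ℝ → X, IsLocalGeodesic g Set.univ ∧ ∀ t ∈ Set.Icc a b, g t = f t

/-- The pair `(u,v)` generates a free sub-semigroup: two products of positive powers of
`u` and `v` coincide only when they coincide as words. -/
def FreeSemigroupPair {G : Type*} [Monoid G] (u v : G) : Prop :=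
  Function.Injective ⇑(FreeMonoid.lift fun b : Bool => bif b then u else v)

/-- The pair `(u,v)` generates a free subgroup, free on `{u,v}`. -/
def FreeGroupPair {G : Type*} [Group G] (u v : G) : Prop :=
  Function.Injective ⇑(FreeGroup.lift fun b : Bool => bif b then u else v)

/-- A group is virtually cyclic if it has a cyclic subgroup of finite index. -/
def VirtuallyCyclic (G : Type*) [Group G] : Prop :=
  ∃ H : Subgroup G, H.FiniteIndex ∧ IsCyclic ↥H

/-- The stable displacement of an isometry `g` of `X`. -/
def stableDispIso {X : Type*} [MetricSpace X] (g : X ≃ᵢ X) (x : X) : ℝ :=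
  liminf (fun n : ℕ => dist x ((g ^ n) x) / (n : ℝ)) atTop

/-- The minimal displacement `s(g) = inf_x d(x, g x)` of an isometry `g` of `X`. -/
def minDisp {X : Type*} [MetricSpace X] (g : X ≃ᵢ X) : ℝ :=
  ⨅ x : X, dist x (g x)

/-- Discreteness of a subgroup of the isometry group of a proper metric space,
expressed equivalently by the properness of its natural action. -/
def DiscreteIsomSubgroup {X : Type*} [MetricSpace X] (H : Subgroup (X ≃ᵢ X)) : Prop :=
  ∀ (x : X) (R : ℝ), {g : X ≃ᵢ X | g ∈ H ∧ dist x (g x) ≤ R}.Finite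

/-- The Margulis constant `L(a,b)` of a pair of isometries. -/
def margulisConst {X : Type*} [MetricSpace X] (a b : X ≃ᵢ X) : ℝ :=
  sInf {r : ℝ | ∃ (x : X) (p q : ℤ), p ≠ 0 ∧ q ≠ 0 ∧ a ^ p ≠ 1 ∧ b ^ q ≠ 1 ∧
    r = max (dist x ((a ^ p) x)) (dist x ((b ^ q) x))}

/-- Word length with respect to a generating set `S` (words in `S ∪ S⁻¹`). -/
def wordLength {Γ : Type*} [Group Γ] (S : Set Γ) (γ : Γ) : ℕ :=
  sInf {n : ℕ | ∃ l : List Γ, l.length = n ∧ (∀ s ∈ l, s ∈ S ∨ s⁻¹ ∈ S) ∧ l.prod = γ}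

/-- The algebraic entropy `Ent(Γ,Σ)` of a group with respect to a generating set. -/
def algEntropy (Γ : Type*) [Group Γ] (S : Set Γ) : ℝ :=
  liminf (fun R : ℝ => Real.log (Nat.card {γ : Γ // (wordLength S γ : ℝ) ≤ R}) / R) atTop

/-- `(C, ι)` is a metric realization of the Cayley graph of `(Γ,S)`: `Γ` acts on `C` by
isometries, `ι` is the equivariant vertex embedding, the distance between vertices is the
word distance, and every point of `C` is within distance `1/2` of a vertex. -/
def IsCayleyRealization (Γ : Type*) [Group Γ] (S : Set Γ) (C : Type*) [MetricSpace C]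
    [MulAction Γ C] (ι : Γ → C) : Prop :=
  IsIsometricAction Γ C ∧
    (∀ γ g : Γ, ι (γ * g) = γ • ι g) ∧
    (∀ γ g : Γ, dist (ι γ) (ι g) = (wordLength S (γ⁻¹ * g) : ℝ)) ∧
    (∀ x : C, ∃ γ : Γ, dist x (ι γ) ≤ 1 / 2)

/-- An `α`-HT (`α`-hyperbolically thick) action: an isometric action on a δ-hyperbolic
space all of whose nontrivial elements have stable displacement at least `α`. -/
def IsHTAction (Γ X : Type*) [Group Γ] [MetricSpace X] [MulAction Γ X] (δ α : ℝ) : Prop :=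
  IsDeltaHyperbolic X δ ∧ IsIsometricAction Γ X ∧
    ∀ γ : Γ, γ ≠ 1 → ∀ x : X, α ≤ stableDisp γ x

/-- Witness of an `α`-HT action of `Γ` on some δ-hyperbolic space. -/
structure HTWitness (Γ : Type*) [Group Γ] (δ α : ℝ) where
  X : Type
  [ms : MetricSpace X]
  [ma : MulAction Γ X]
  cond : IsHTAction Γ X δ α

/-- A `(δ,α)`-HT group: non-cyclic, admitting an `α`-HT isometric action on some
δ-hyperbolic space. -/
def IsHTGroup (Γ : Type*) [Group Γ] (δ α : ℝ) : Prop :=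
  ¬ IsCyclic Γ ∧ Nonempty (HTWitness Γ δ α)

/-- Witness for the `(δ,α)`-non-abelian condition on a non-commuting pair `a, b`:
a morphism from `⟨a,b⟩` to a `(δ,α)`-HT group whose image is isomorphic neither to the
trivial group nor to `ℤ`. -/
structure NonAbWitness {Γ : Type*} [Group Γ] (δ α : ℝ) (a b : Γ) where
  G : Type
  [grp : Group G]
  ρ : ↥(Subgroup.closure ({a, b} : Set Γ)) →* G
  ht : IsHTGroup G δ α
  ntriv : ρ.range ≠ ⊥
  notZ : ¬ Nonempty (↥ρ.range ≃* Multiplicative ℤ)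

/-- A `(δ,α)`-non-abelian group. -/
def NonAbelianDA (Γ : Type*) [Group Γ] (δ α : ℝ) : Prop :=
  (∃ a b : Γ, a * b ≠ b * a) ∧
    ∀ a b : Γ, a * b ≠ b * a → Nonempty (NonAbWitness δ α a b)

/-- A `(δ,α)`-transitive non-abelian group: `(δ,α)`-non-abelian, and commutation is a
transitive relation on `Γ \ {1}`. -/
def TransNonAbelianDA (Γ : Type*) [Group Γ] (δ α : ℝ) : Prop :=
  NonAbelianDA Γ δ α ∧
    ∀ a b c : Γ, a ≠ 1 → b ≠ 1 → c ≠ 1 → a * b = b * a → b * c = c * b → a * c = c * a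

/-- Extended-real logarithm of an extended nonnegative real. -/
def ennlog (x : ENNReal) : EReal :=
  if x = 0 then ⊥ else if x = ⊤ then ⊤ else ((Real.log x.toReal : ℝ) : EReal)

/-- The entropy of a metric measure space,
`Ent(Y,d,μ) = liminf_{R→∞} (1/R) ln μ(B(y,R))`, valued in `EReal`. -/
def mmEntropy {Y : Type*} [MetricSpace Y] [MeasurableSpace Y] (μ : MeasureTheory.Measure Y) (y : Y) : EReal :=
  liminf (fun R : ℝ => ((R⁻¹ : ℝ) : EReal) * ennlog (μ (Metric.ball y R))) atTop

end
section PingPongAux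

open List

variable {G : Type*} [Group G]

/-- product of a block word -/
def prodW (F : Bool → G) (L : List (Bool × ℤ)) : G := (L.map fun p => F p.1 ^ p.2).prod

@[simp] lemma prodW_nil (F : Bool → G) : prodW F [] = 1 := rfl

lemma prodW_cons (F : Bool → G) (p : Bool × ℤ) (t : List (Bool × ℤ)) :
    prodW F (p :: t) = F p.1 ^ p.2 * prodW F t := by simp [prodW]

lemma prodW_append (F : Bool → G) (L₁ L₂ : List (Bool × ℤ)) :
    prodW F (L₁ ++ L₂) = prodW F L₁ * prodW F L₂ := by simp [prodW]

def pushBlock (p : Bool × ℤ) : List (Bool × ℤ) → List (Bool × ℤ)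
  | [] => if p.2 = 0 then [] else [p]
  | q :: t' =>
    if p.1 = q.1 then (if p.2 + q.2 = 0 then t' else (p.1, p.2 + q.2) :: t')
    else (if p.2 = 0 then q :: t' else p :: q :: t')

def mkBlocks (L : List (Bool × ℤ)) : List (Bool × ℤ) := L.foldr pushBlock []

@[simp] lemma mkBlocks_nil : mkBlocks ([] : List (Bool × ℤ)) = [] := rfl

lemma mkBlocks_cons (p : Bool × ℤ) (t : List (Bool × ℤ)) :
    mkBlocks (p :: t) = pushBlock p (mkBlocks t) := rfl

lemma prodW_pushBlock (F : Bool → G) (p : Bool × ℤ) (M : List (Bool × ℤ)) :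
    prodW F (pushBlock p M) = F p.1 ^ p.2 * prodW F M := by
  cases M with
  | nil =>
    by_cases h : p.2 = 0 <;> simp [pushBlock, h, prodW_cons]
  | cons q t' =>
    by_cases h1 : p.1 = q.1
    · by_cases h2 : p.2 + q.2 = 0
      · simp only [pushBlock, if_pos h1, if_pos h2]
        rw [prodW_cons, ← h1, ← mul_assoc, ← zpow_add, h2, zpow_zero, one_mul]
      · simp only [pushBlock, if_pos h1, if_neg h2]
        rw [prodW_cons, prodW_cons, ← h1, ← mul_assoc, ← zpow_add]
    · by_cases h3 : p.2 = 0
      · simp [pushBlock, h1, h3]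
      · simp only [pushBlock, if_neg h1, if_neg h3]
        rw [prodW_cons]

lemma prodW_mkBlocks (F : Bool → G) (L : List (Bool × ℤ)) :
    prodW F (mkBlocks L) = prodW F L := by
  induction L with
  | nil => rfl
  | cons p t ih => rw [mkBlocks_cons, prodW_pushBlock, ih, prodW_cons]

lemma mkBlocks_spec (L : List (Bool × ℤ)) :
    (∀ p ∈ mkBlocks L, p.2 ≠ 0) ∧ (mkBlocks L).IsChain (fun p q => p.1 ≠ q.1) := by
  induction L with
  | nil => simp
  | cons p t ih =>
    obtain ⟨ihz, ihc⟩ := ih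
    rw [mkBlocks_cons]
    cases hM : mkBlocks t with
    | nil => by_cases h : p.2 = 0 <;> simp [pushBlock, h]
    | cons q t' =>
      rw [hM] at ihz ihc
      by_cases h1 : p.1 = q.1
      · by_cases h2 : p.2 + q.2 = 0
        · simp only [pushBlock, if_pos h1, if_pos h2]
          exact ⟨fun r hr => ihz r (mem_cons_of_mem _ hr), ihc.tail⟩
        · simp only [pushBlock, if_pos h1, if_neg h2]
          constructor
          · rintro r hr
            rcases mem_cons.1 hr with rfl | hr
            · exact h2
            · exact ihz r (mem_cons_of_mem _ hr)
          · rw [isChain_cons] at ihc ⊢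
            refine ⟨fun y hy => ?_, ihc.2⟩
            show p.1 ≠ y.1
            rw [h1]; exact ihc.1 y hy
      · by_cases h3 : p.2 = 0
        · simp only [pushBlock, if_neg h1, if_pos h3]
          exact ⟨ihz, ihc⟩
        · simp only [pushBlock, if_neg h1, if_neg h3]
          refine ⟨?_, isChain_cons_cons.2 ⟨h1, ihc⟩⟩
          rintro r hr
          rcases mem_cons.1 hr with rfl | hr
          · exact h3
          · exact ihz r hr

lemma mkBlocks_head : ∀ (t : List (Bool × ℤ)) (p : Bool × ℤ),
    (∀ r ∈ p :: t, r.2 ≠ 0) →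
    ((p :: t).IsChain fun r s => r.1 = s.1 → (0 < r.2 ↔ 0 < s.2)) →
    ∃ e t'', mkBlocks (p :: t) = (p.1, e) :: t'' ∧ (0 < e ↔ 0 < p.2)
  | [], p, hA, _ => by
    refine ⟨p.2, [], ?_, Iff.rfl⟩
    have hp := hA p (mem_cons_self)
    simp [mkBlocks_cons, pushBlock, hp]
  | r :: t₂, p, hA, hB => by
    obtain ⟨e, t'', hEq, hSign⟩ :=
      mkBlocks_head t₂ r (fun s hs => hA s (mem_cons_of_mem _ hs)) (isChain_cons_cons.1 hB).2
    have hpz : p.2 ≠ 0 := hA p (mem_cons_self)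
    have hrz : r.2 ≠ 0 := hA r (mem_cons_of_mem _ (mem_cons_self))
    have hez : e ≠ 0 := by
      have hz := (mkBlocks_spec (r :: t₂)).1
      rw [hEq] at hz
      exact hz (r.1, e) (mem_cons_self)
    rw [mkBlocks_cons, hEq]
    by_cases h1 : p.1 = r.1
    · have hsame : 0 < p.2 ↔ 0 < r.2 := (isChain_cons_cons.1 hB).1 h1
      have h3 : 0 < p.2 ↔ 0 < e := hsame.trans hSign.symm
      have h2 : p.2 + e ≠ 0 := by omega
      refine ⟨p.2 + e, t'', ?_, by omega⟩
      simp [pushBlock, h1, h2]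
    · refine ⟨p.2, (r.1, e) :: t'', ?_, Iff.rfl⟩
      simp [pushBlock, h1, hpz]

lemma mkBlocks_posneg : ∀ (L : List (Bool × ℤ)),
    (∀ r ∈ L, r.2 ≠ 0) →
    (L.IsChain fun r s => r.1 = s.1 → (0 < r.2 ↔ 0 < s.2)) →
    (L.IsChain fun r s => ¬(0 < r.2 ∧ s.2 < 0)) →
    (mkBlocks L).IsChain fun r s => ¬(0 < r.2 ∧ s.2 < 0)
  | [], _, _, _ => by simp
  | [p], hA, _, _ => by
    by_cases h : p.2 = 0 <;> simp [mkBlocks_cons, pushBlock, h]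
  | p :: r :: t₂, hA, hB, hC => by
    have hA' : ∀ s ∈ r :: t₂, s.2 ≠ 0 := fun s hs => hA s (mem_cons_of_mem _ hs)
    obtain ⟨e, t'', hEq, hSign⟩ := mkBlocks_head t₂ r hA' (isChain_cons_cons.1 hB).2
    have IH := mkBlocks_posneg (r :: t₂) hA' (isChain_cons_cons.1 hB).2 (isChain_cons_cons.1 hC).2
    rw [hEq] at IH
    have hpz : p.2 ≠ 0 := hA p (mem_cons_self)
    have hrz : r.2 ≠ 0 := hA r (mem_cons_of_mem _ (mem_cons_self))
    have hez : e ≠ 0 := by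
      have hz := (mkBlocks_spec (r :: t₂)).1
      rw [hEq] at hz
      exact hz (r.1, e) (mem_cons_self)
    rw [mkBlocks_cons, hEq]
    by_cases h1 : p.1 = r.1
    · have hsame : 0 < p.2 ↔ 0 < r.2 := (isChain_cons_cons.1 hB).1 h1
      have h3 : 0 < p.2 ↔ 0 < e := hsame.trans hSign.symm
      have h2 : p.2 + e ≠ 0 := by omega
      simp only [pushBlock, if_pos h1, if_neg h2]
      rw [isChain_cons] at IH ⊢
      refine ⟨fun y hy => ?_, IH.2⟩
      have := IH.1 y hy
      show ¬(0 < p.2 + e ∧ y.2 < 0)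
      simp only at this
      omega
    · simp only [pushBlock, if_neg h1, if_neg hpz]
      refine isChain_cons_cons.2 ⟨?_, IH⟩
      have hpr : ¬(0 < p.2 ∧ r.2 < 0) := (isChain_cons_cons.1 hC).1
      show ¬(0 < p.2 ∧ e < 0)
      omega

lemma chain'_of_forall {α : Type*} {R : α → α → Prop} :
    ∀ {l : List α}, (∀ p ∈ l, ∀ q ∈ l, R p q) → l.IsChain R
  | [], _ => .nil
  | [_], _ => isChain_singleton _
  | a :: b :: l, h =>
    isChain_cons_cons.2 ⟨h a (mem_cons_self) b (mem_cons_of_mem _ (mem_cons_self)),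
      chain'_of_forall (fun p hp q hq => h p (mem_cons_of_mem _ hp) q (mem_cons_of_mem _ hq))⟩

end PingPongAux

section PingPongGeo

lemma gromovProd_nonneg {X : Type*} [MetricSpace X] (w x y : X) : 0 ≤ gromovProd w x y := by
  have h1 := dist_triangle x w y
  have h2 : dist x w = dist w x := dist_comm x w
  unfold gromovProd; linarith

lemma gromovProd_le_dist {X : Type*} [MetricSpace X] (w x y : X) : gromovProd w x y ≤ dist w x := by
  have h1 := dist_triangle w x y
  unfold gromovProd; linarith

lemma gromovProd_le_dist' {X : Type*} [MetricSpace X] (w x y : X) : gromovProd w x y ≤ dist w y := by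
  have h1 := dist_triangle w y x
  have h2 : dist y x = dist x y := dist_comm y x
  unfold gromovProd; linarith

lemma four_point {X : Type*} [MetricSpace X] {δ : ℝ} (hX : IsDeltaHyperbolic X δ) (w x y z : X) :
    min (gromovProd w x y) (gromovProd w y z) - δ ≤ gromovProd w x z := by
  obtain ⟨-, hgeo, hthin⟩ := hX
  obtain ⟨f, hf⟩ := hgeo w x
  obtain ⟨g, hg⟩ := hgeo w y
  obtain ⟨h, hh⟩ := hgeo w z
  set t := min (gromovProd w x y) (gromovProd w y z) with ht
  have ht0 : 0 ≤ t := le_min (gromovProd_nonneg _ _ _) (gromovProd_nonneg _ _ _)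
  have d1 : dist (f t) (g t) ≤ δ := hthin w x y f g hf hg t ht0 (min_le_left _ _)
  have d2 : dist (g t) (h t) ≤ δ := hthin w y z g h hg hh t ht0 (min_le_right _ _)
  have htx : t ≤ dist w x := le_trans (min_le_left _ _) (gromovProd_le_dist _ _ _)
  have htz : t ≤ dist w z := le_trans (min_le_right _ _) (gromovProd_le_dist' _ _ _)
  have hfx : dist x (f t) = dist w x - t := by
    obtain ⟨hf0, hfd, hfiso⟩ := hf
    have h1 := hfiso (dist w x) ⟨dist_nonneg, le_refl _⟩ t ⟨ht0, htx⟩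
    rw [hfd] at h1
    rw [h1, abs_of_nonneg (by linarith)]
  have hhz : dist z (h t) = dist w z - t := by
    obtain ⟨hh0, hhd, hhiso⟩ := hh
    have h1 := hhiso (dist w z) ⟨dist_nonneg, le_refl _⟩ t ⟨ht0, htz⟩
    rw [hhd] at h1
    rw [h1, abs_of_nonneg (by linarith)]
  have tri : dist x z ≤ dist x (f t) + dist (f t) (h t) + dist (h t) z :=
    dist_triangle4 x (f t) (h t) z
  have tri2 : dist (f t) (h t) ≤ dist (f t) (g t) + dist (g t) (h t) := dist_triangle _ _ _
  have hc : dist (h t) z = dist z (h t) := dist_comm _ _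
  unfold gromovProd
  linarith

lemma chain_lemma {X : Type*} [MetricSpace X] {δ : ℝ}
    (four : ∀ w x y z : X, min (gromovProd w x y) (gromovProd w y z) - δ ≤ gromovProd w x z)
    (y : ℕ → X) (n : ℕ) (hn : 1 ≤ n)
    (hpos : ∀ i, i < n → 0 < dist (y i) (y (i + 1)))
    (hturn : ∀ i, i + 2 ≤ n →
      max (dist (y i) (y (i + 1))) (dist (y (i + 1)) (y (i + 2))) + 2 * δ < dist (y i) (y (i + 2)))
    : 0 < dist (y 0) (y n) := by
  have main : ∀ j, j < n →
      gromovProd (y j) (y 0) (y (j + 1)) < dist (y j) (y (j + 1)) / 2 ∧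
        0 < dist (y 0) (y (j + 1)) := by
    intro j
    induction j with
    | zero =>
      intro h
      have h1 := hpos 0 h
      refine ⟨?_, h1⟩
      have h0 : dist (y 0) (y 0) = 0 := dist_self _
      unfold gromovProd
      linarith
    | succ j ih =>
      intro hjn
      obtain ⟨hQ, hD⟩ := ih (by omega)
      have hturnj := hturn j (by omega)
      have c1 : dist (y (j+1)) (y j) = dist (y j) (y (j+1)) := dist_comm _ _
      have c2 : dist (y (j+1)) (y 0) = dist (y 0) (y (j+1)) := dist_comm _ _
      have c3 : dist (y j) (y 0) = dist (y 0) (y j) := dist_comm _ _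
      have hmm := min_add_max (dist (y j) (y (j+1))) (dist (y (j+1)) (y (j+2)))
      have hR : gromovProd (y (j+1)) (y j) (y (j+2)) <
          min (dist (y j) (y (j+1))) (dist (y (j+1)) (y (j+2))) / 2 - δ := by
        unfold gromovProd
        linarith
      have hA : gromovProd (y (j+1)) (y j) (y (j+2)) + δ <
          gromovProd (y (j+1)) (y j) (y 0) := by
        have hml := min_le_left (dist (y j) (y (j+1))) (dist (y (j+1)) (y (j+2)))
        unfold gromovProd at hQ hR ⊢
        linarith
      have hB : gromovProd (y (j+1)) (y 0) (y (j+2)) ≤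
          gromovProd (y (j+1)) (y j) (y (j+2)) + δ := by
        by_contra hc
        push_neg at hc
        have h4 := four (y (j+1)) (y j) (y 0) (y (j+2))
        have hlt := lt_min hA hc
        linarith
      have hBb : gromovProd (y (j+1)) (y 0) (y (j+2)) < dist (y (j+1)) (y (j+2)) / 2 := by
        have hmr := min_le_right (dist (y j) (y (j+1))) (dist (y (j+1)) (y (j+2)))
        linarith
      refine ⟨hBb, ?_⟩
      unfold gromovProd at hBb
      linarith
  obtain ⟨-, h⟩ := main (n - 1) (by omega)
  have hh : n - 1 + 1 = n := by omega
  rwa [hh] at h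

end PingPongGeo

section PingPongKey

open List

variable {X : Type*} [MetricSpace X]

lemma isoe_zpow_cancel (g : X ≃ᵢ X) (e : ℤ) (z : X) : (g ^ (-e)) ((g ^ e) z) = z := by
  rw [← IsometryEquiv.mul_apply, ← zpow_add]
  simp

lemma isoe_dist_zpow_neg (g : X ≃ᵢ X) (e : ℤ) (x : X) :
    dist x ((g ^ (-e)) x) = dist x ((g ^ e) x) := by
  have h1 := (g ^ e).dist_eq x ((g ^ (-e)) x)
  have h2 : (g ^ e) ((g ^ (-e)) x) = x := by
    rw [← IsometryEquiv.mul_apply, ← zpow_add]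
    simp
  rw [h2] at h1
  rw [← h1, dist_comm]

lemma key_move {δ : ℝ} (hδ : 0 < δ)
    (four : ∀ w x y z : X, min (gromovProd w x y) (gromovProd w y z) - δ ≤ gromovProd w x z)
    (a b : X ≃ᵢ X) (x : X) (Ok : ℤ → ℤ → Prop)
    (hyp : ∀ p q : ℤ, p ≠ 0 → q ≠ 0 → Ok p q →
      max (dist x ((a ^ p) x)) (dist x ((b ^ q) x)) + 2 * δ < dist ((a ^ p) x) ((b ^ q) x))
    (hOk1 : ∀ e : ℤ, Ok e 1 ∧ Ok 1 e)
    (W : List (Bool × ℤ)) (hne : W ≠ [])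
    (hnz : ∀ p ∈ W, p.2 ≠ 0)
    (halt : W.IsChain fun p q => p.1 ≠ q.1)
    (hok : W.IsChain fun p q => Ok (-p.2) q.2 ∧ Ok q.2 (-p.2)) :
    prodW (fun c => bif c then a else b) W ≠ 1 := by
  set F : Bool → X ≃ᵢ X := (fun c => bif c then a else b) with hF
  have hFt : F true = a := rfl
  have hFf : F false = b := rfl
  -- positivity of a single block displacement
  have hsingle : ∀ (c : Bool) (e : ℤ), e ≠ 0 → 0 < dist x ((F c ^ e) x) := by
    intro c e he
    rcases lt_or_eq_of_le (dist_nonneg : 0 ≤ dist x ((F c ^ e) x)) with h | h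
    · exact h
    have hfix : (F c ^ e) x = x := by
      have h' := h.symm
      rwa [dist_comm, dist_eq_zero] at h'
    exfalso
    cases c
    · rw [hFf] at hfix
      have h := hyp 1 e one_ne_zero he (hOk1 e).2
      rw [hfix] at h
      have h1 := le_max_left (dist x ((a ^ (1:ℤ)) x)) (dist x x)
      have h2 : dist ((a ^ (1:ℤ)) x) x = dist x ((a ^ (1:ℤ)) x) := dist_comm _ _
      have h3 : dist x x = 0 := dist_self _
      linarith
    · rw [hFt] at hfix
      have h := hyp e 1 he one_ne_zero (hOk1 e).1
      rw [hfix] at h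
      have h1 := le_max_right (dist x x) (dist x ((b ^ (1:ℤ)) x))
      have h3 : dist x x = 0 := dist_self _
      linarith
  have hn1 : 1 ≤ W.length := List.length_pos_iff.2 hne
  set y : ℕ → X := fun i => (prodW F (W.take i)) x with hy
  have htake : ∀ (i : ℕ) (hi : i < W.length), W.take (i + 1) = W.take i ++ [W[i]] := by
    intro i hi
    rw [List.take_succ, List.getElem?_eq_getElem hi]
    rfl
  have hstep : ∀ (i : ℕ) (hi : i < W.length),
      y (i + 1) = prodW F (W.take i) ((F W[i].1 ^ W[i].2) x) := by
    intro i hi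
    show (prodW F (W.take (i+1))) x = _
    rw [htake i hi, prodW_append, prodW_cons, prodW_nil, mul_one, IsometryEquiv.mul_apply]
  have hdist1 : ∀ (i : ℕ) (hi : i < W.length),
      dist (y i) (y (i + 1)) = dist x ((F W[i].1 ^ W[i].2) x) := by
    intro i hi
    rw [hstep i hi]
    exact (prodW F (W.take i)).dist_eq _ _
  have hdist2 : ∀ (i : ℕ) (hi : i + 1 < W.length), dist (y i) (y (i + 2)) =
      dist ((F W[i].1 ^ (-W[i].2)) x) ((F W[i+1].1 ^ W[i+1].2) x) := by
    intro i hi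
    have e1 : y (i + 2) =
        prodW F (W.take i) ((F W[i].1 ^ W[i].2) ((F W[i+1].1 ^ W[i+1].2) x)) := by
      have h := hstep (i+1) hi
      rw [htake i (by omega), prodW_append, prodW_cons, prodW_nil, mul_one,
        IsometryEquiv.mul_apply] at h
      exact h
    rw [e1]
    have hyi : y i = prodW F (W.take i) x := rfl
    rw [hyi, (prodW F (W.take i)).dist_eq]
    have h3 := (F W[i].1 ^ (-W[i].2)).dist_eq x ((F W[i].1 ^ W[i].2) ((F W[i+1].1 ^ W[i+1].2) x))
    rw [isoe_zpow_cancel] at h3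
    exact h3.symm
  have hpos : ∀ i, i < W.length → 0 < dist (y i) (y (i + 1)) := by
    intro i hi
    rw [hdist1 i hi]
    exact hsingle _ _ (hnz _ (List.getElem_mem _))
  have hturn : ∀ i, i + 2 ≤ W.length →
      max (dist (y i) (y (i + 1))) (dist (y (i + 1)) (y (i + 2))) + 2 * δ
        < dist (y i) (y (i + 2)) := by
    intro i h
    have h1 : i < W.length := by omega
    have h2 : i + 1 < W.length := by omega
    have hne' : W[i].1 ≠ W[i+1].1 := by
      have hcg := List.isChain_iff_getElem.1 halt i (by omega)
      simpa using hcg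
    have hok' : Ok (-W[i].2) W[i+1].2 ∧ Ok W[i+1].2 (-W[i].2) := by
      have hcg := List.isChain_iff_getElem.1 hok i (by omega)
      simpa using hcg
    have hz1 : W[i].2 ≠ 0 := hnz _ (List.getElem_mem _)
    have hz2 : W[i+1].2 ≠ 0 := hnz _ (List.getElem_mem _)
    rw [hdist1 i h1, hdist1 (i+1) h2, hdist2 i h2]
    cases hc : W[i].1 with
    | false =>
      have hc' : W[i+1].1 = true := by
        rw [hc] at hne'
        simp only [ne_eq] at hne'
        cases hW : W[i+1].1
        · exact absurd hW.symm hne'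
        · rfl
      rw [hc', hFf, hFt]
      have h := hyp W[i+1].2 (-W[i].2) hz2 (neg_ne_zero.2 hz1) hok'.2
      rw [isoe_dist_zpow_neg b] at h
      rw [max_comm (dist x ((a ^ W[i+1].2) x)) (dist x ((b ^ W[i].2) x)),
        dist_comm ((a ^ W[i+1].2) x) ((b ^ (-W[i].2)) x)] at h
      exact h
    | true =>
      have hc' : W[i+1].1 = false := by
        rw [hc] at hne'
        simp only [ne_eq] at hne'
        cases hW : W[i+1].1
        · rfl
        · exact absurd hW.symm hne'
      rw [hc', hFt, hFf]
      have h := hyp (-W[i].2) W[i+1].2 (neg_ne_zero.2 hz1) hz2 hok'.1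
      rw [isoe_dist_zpow_neg a] at h
      exact h
  intro hcontra
  have hfin := chain_lemma four y W.length hn1 hpos hturn
  have h0 : y 0 = x := by
    show (prodW F (W.take 0)) x = x
    rw [List.take_zero, prodW_nil]
    rfl
  have hN : y W.length = x := by
    show (prodW F (W.take W.length)) x = x
    rw [List.take_length, hcontra]
    rfl
  rw [h0, hN, dist_self] at hfin
  exact lt_irrefl _ hfin

end PingPongKey

section PingPongGlue

open List

lemma map_prodW {G H : Type*} [Group G] [Group H] (φ : G →* H) (F : Bool → G)
    (L : List (Bool × ℤ)) : φ (prodW F L) = prodW (fun c => φ (F c)) L := by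
  induction L with
  | nil => simp [prodW]
  | cons p t ih => rw [prodW_cons, prodW_cons, map_mul, map_zpow, ih]

lemma freeGroup_mk_eq_prodW (l : List (Bool × Bool)) :
    FreeGroup.mk l = prodW FreeGroup.of (l.map fun p => (p.1, if p.2 then (1 : ℤ) else -1)) := by
  induction l with
  | nil => rw [← FreeGroup.one_eq_mk]; rfl
  | cons p t ih =>
    have h1 : FreeGroup.mk (p :: t) = FreeGroup.mk [p] * FreeGroup.mk t := by
      rw [FreeGroup.mul_mk]
      rfl
    rw [h1, ih, List.map_cons, prodW_cons]
    congr 1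
    rcases p with ⟨c, s⟩
    cases s
    · show FreeGroup.mk [(c, false)] = FreeGroup.of c ^ (if false then (1:ℤ) else -1)
      have h2 : (FreeGroup.of c)⁻¹ = FreeGroup.mk [(c, false)] := by
        rw [show FreeGroup.of c = FreeGroup.mk [(c, true)] from rfl, FreeGroup.inv_mk]
        rfl
      simp only [if_neg Bool.false_ne_true, zpow_neg, zpow_one]
      exact h2.symm
    · show FreeGroup.mk [(c, true)] = FreeGroup.of c ^ (if true then (1:ℤ) else -1)
      simp only [if_pos, zpow_one]
      rfl

lemma prodW_posList {G : Type*} [Group G] (F : Bool → G) (l : List Bool) :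
    prodW F (l.map fun t => (t, (1 : ℤ))) = (l.map F).prod := by
  induction l with
  | nil => rfl
  | cons c t ih => simp [prodW_cons, ih, zpow_one]

lemma prodW_negList {G : Type*} [Group G] (F : Bool → G) (l : List Bool) :
    prodW F (l.reverse.map fun t => (t, (-1 : ℤ))) = ((l.map F).prod)⁻¹ := by
  induction l with
  | nil => simp [prodW]
  | cons c t ih =>
    rw [List.reverse_cons, List.map_append, prodW_append, ih]
    simp [prodW_cons, mul_inv_rev, zpow_neg, zpow_one]

variable {X : Type*} [MetricSpace X]

lemma core_ne_one {δ : ℝ} (hδ : 0 < δ)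
    (four : ∀ w x y z : X, min (gromovProd w x y) (gromovProd w y z) - δ ≤ gromovProd w x z)
    (a b : X ≃ᵢ X) (x : X)
    (hx : ∀ p q : ℤ, p ≠ 0 → q ≠ 0 → ¬(p < 0 ∧ q < 0) →
      max (dist x ((a ^ p) x)) (dist x ((b ^ q) x)) + 2 * δ < dist ((a ^ p) x) ((b ^ q) x))
    (L : List (Bool × ℤ)) (hne : L ≠ [])
    (hA : ∀ p ∈ L, p.2 ≠ 0)
    (hB : L.IsChain fun p q => p.1 = q.1 → (0 < p.2 ↔ 0 < q.2))
    (hC : L.IsChain fun p q => ¬(0 < p.2 ∧ q.2 < 0)) :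
    prodW (fun c => bif c then a else b) L ≠ 1 := by
  obtain ⟨p, t, rfl⟩ := List.exists_cons_of_ne_nil hne
  obtain ⟨e, t'', hEq, -⟩ := mkBlocks_head t p hA hB
  intro h
  refine key_move hδ four a b x (fun p q => ¬(p < 0 ∧ q < 0)) hx
    (fun e => ⟨fun hc => by omega, fun hc => by omega⟩)
    (mkBlocks (p :: t)) (by rw [hEq]; simp)
    (mkBlocks_spec _).1 (mkBlocks_spec _).2 ?_ ?_
  · exact (mkBlocks_posneg _ hA hB hC).imp fun r s hrs =>
      ⟨fun hc => hrs ⟨by omega, hc.2⟩, fun hc => hrs ⟨by omega, hc.1⟩⟩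
  · rw [prodW_mkBlocks]
    exact h

lemma pos_ne_one {δ : ℝ} (hδ : 0 < δ)
    (four : ∀ w x y z : X, min (gromovProd w x y) (gromovProd w y z) - δ ≤ gromovProd w x z)
    (a b : X ≃ᵢ X) (x : X)
    (hx : ∀ p q : ℤ, p ≠ 0 → q ≠ 0 → ¬(p < 0 ∧ q < 0) →
      max (dist x ((a ^ p) x)) (dist x ((b ^ q) x)) + 2 * δ < dist ((a ^ p) x) ((b ^ q) x))
    (c : Bool) (s : List Bool) :
    ((c :: s).map fun c => bif c then a else b).prod ≠ 1 := by
  have h := core_ne_one hδ four a b x hx ((c :: s).map fun t => (t, (1 : ℤ)))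
    (by simp)
    (by intro p hp; rcases List.mem_map.1 hp with ⟨u, -, rfl⟩; simp)
    (chain'_of_forall (by
      intro p hp q hq
      rcases List.mem_map.1 hp with ⟨u, -, rfl⟩
      rcases List.mem_map.1 hq with ⟨v, -, rfl⟩
      simp))
    (chain'_of_forall (by
      intro p hp q hq
      rcases List.mem_map.1 hp with ⟨u, -, rfl⟩
      rcases List.mem_map.1 hq with ⟨v, -, rfl⟩
      simp))
  rwa [prodW_posList] at h

lemma mixed_ne {δ : ℝ} (hδ : 0 < δ)
    (four : ∀ w x y z : X, min (gromovProd w x y) (gromovProd w y z) - δ ≤ gromovProd w x z)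
    (a b : X ≃ᵢ X) (x : X)
    (hx : ∀ p q : ℤ, p ≠ 0 → q ≠ 0 → ¬(p < 0 ∧ q < 0) →
      max (dist x ((a ^ p) x)) (dist x ((b ^ q) x)) + 2 * δ < dist ((a ^ p) x) ((b ^ q) x))
    (c c' : Bool) (s s' : List Bool) (hcc : c' ≠ c) :
    ((c' :: s').map fun c => bif c then a else b).prod ≠
      ((c :: s).map fun c => bif c then a else b).prod := by
  set F : Bool → X ≃ᵢ X := fun c => bif c then a else b with hF
  set L : List (Bool × ℤ) :=
    ((c' :: s').reverse.map fun t => (t, (-1 : ℤ))) ++ ((c :: s).map fun t => (t, (1 : ℤ)))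
    with hL
  have hmemneg : ∀ p ∈ (c' :: s').reverse.map fun t => (t, (-1 : ℤ)), p.2 = -1 := by
    intro p hp; rcases List.mem_map.1 hp with ⟨u, -, rfl⟩; rfl
  have hmempos : ∀ p ∈ (c :: s).map fun t => (t, (1 : ℤ)), p.2 = 1 := by
    intro p hp; rcases List.mem_map.1 hp with ⟨u, -, rfl⟩; rfl
  have hlast : ((c' :: s').reverse.map fun t => (t, (-1 : ℤ))).getLast? = some (c', -1) := by
    rw [List.map_reverse, List.getLast?_reverse]
    rfl
  have hhead : (((c :: s).map fun t => (t, (1 : ℤ)))).head? = some (c, 1) := rfl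
  have hne : L ≠ [] := by
    rw [hL]
    simp
  have hA : ∀ p ∈ L, p.2 ≠ 0 := by
    intro p hp
    rcases List.mem_append.1 hp with hp | hp
    · rw [hmemneg p hp]; omega
    · rw [hmempos p hp]; omega
  have hB : L.IsChain fun p q => p.1 = q.1 → (0 < p.2 ↔ 0 < q.2) := by
    rw [hL, List.isChain_append]
    refine ⟨chain'_of_forall ?_, chain'_of_forall ?_, ?_⟩
    · intro p hp q hq
      rw [hmemneg p hp, hmemneg q hq]
      simp
    · intro p hp q hq
      rw [hmempos p hp, hmempos q hq]
      simp
    · intro u hu v hv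
      rw [hlast, Option.mem_some_iff] at hu
      rw [hhead, Option.mem_some_iff] at hv
      subst hu; subst hv
      intro hc
      exact absurd hc hcc
  have hC : L.IsChain fun p q => ¬(0 < p.2 ∧ q.2 < 0) := by
    rw [hL, List.isChain_append]
    refine ⟨chain'_of_forall ?_, chain'_of_forall ?_, ?_⟩
    · intro p hp q hq
      rw [hmemneg p hp]
      omega
    · intro p hp q hq
      rw [hmempos q hq]
      omega
    · intro u hu v hv
      rw [hlast, Option.mem_some_iff] at hu
      subst hu
      omega
  have hprod : prodW F L = (((c' :: s').map F).prod)⁻¹ * ((c :: s).map F).prod := by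
    rw [hL, prodW_append, prodW_negList, prodW_posList]
  intro h
  have := core_ne_one hδ four a b x hx L hne hA hB hC
  rw [hprod, h, inv_mul_cancel] at this
  exact this rfl

lemma semigroup_list {δ : ℝ} (hδ : 0 < δ)
    (four : ∀ w x y z : X, min (gromovProd w x y) (gromovProd w y z) - δ ≤ gromovProd w x z)
    (a b : X ≃ᵢ X) (x : X)
    (hx : ∀ p q : ℤ, p ≠ 0 → q ≠ 0 → ¬(p < 0 ∧ q < 0) →
      max (dist x ((a ^ p) x)) (dist x ((b ^ q) x)) + 2 * δ < dist ((a ^ p) x) ((b ^ q) x)) :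
    ∀ l₁ l₂ : List Bool,
      (l₁.map fun c => bif c then a else b).prod = (l₂.map fun c => bif c then a else b).prod →
      l₁ = l₂ := by
  intro l₁
  induction l₁ with
  | nil =>
    intro l₂ h
    cases l₂ with
    | nil => rfl
    | cons c s =>
      exfalso
      exact pos_ne_one hδ four a b x hx c s (by rw [← h]; rfl)
  | cons c s ih =>
    intro l₂ h
    cases l₂ with
    | nil =>
      exfalso
      exact pos_ne_one hδ four a b x hx c s (by rw [h]; rfl)
    | cons c' s' =>
      by_cases hcc : c = c'
      · subst hcc
        have h2 : (bif c then a else b) * (s.map fun c => bif c then a else b).prod =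
            (bif c then a else b) * (s'.map fun c => bif c then a else b).prod := by
          simpa using h
        rw [ih s' (mul_left_cancel h2)]
      · exact absurd h.symm (mixed_ne hδ four a b x hx c c' s s' (Ne.symm hcc))

end PingPongGlue

theorem pingpong_freeness'
    {X : Type*} [MetricSpace X] (δ : ℝ) (hδ : 0 < δ) (hX : IsDeltaHyperbolic X δ)
    (a b : X ≃ᵢ X) :
    ((∃ x : X, ∀ p q : ℤ, p ≠ 0 → q ≠ 0 →
        max (dist x ((a ^ p) x)) (dist x ((b ^ q) x)) + 2 * δ < dist ((a ^ p) x) ((b ^ q) x)) →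
      Function.Injective ⇑(FreeGroup.lift fun c : Bool => bif c then a else b)) ∧
    ((∃ x : X, ∀ p q : ℤ, p ≠ 0 → q ≠ 0 → ¬ (p < 0 ∧ q < 0) →
        max (dist x ((a ^ p) x)) (dist x ((b ^ q) x)) + 2 * δ < dist ((a ^ p) x) ((b ^ q) x)) →
      Function.Injective ⇑(FreeMonoid.lift fun c : Bool => bif c then a else b)) := by
  constructor
  · rintro ⟨x, hx⟩
    have four : ∀ w x' y z : X,
        min (gromovProd w x' y) (gromovProd w y z) - δ ≤ gromovProd w x' z :=
      fun w x' y z => four_point hX w x' y z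
    rw [injective_iff_map_eq_one]
    intro w hw
    set L : List (Bool × ℤ) := w.toWord.map fun p => (p.1, if p.2 then (1 : ℤ) else -1) with hL
    have hrep : w = prodW FreeGroup.of (mkBlocks L) := by
      rw [prodW_mkBlocks, hL, ← freeGroup_mk_eq_prodW, FreeGroup.mk_toWord]
    cases hM : mkBlocks L with
    | nil => rw [hrep, hM, prodW_nil]
    | cons m ms =>
      exfalso
      have hlift : prodW (fun c => bif c then a else b) (mkBlocks L) = 1 := by
        have hcomm := map_prodW (FreeGroup.lift fun c : Bool => bif c then a else b)
          FreeGroup.of (mkBlocks L)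
        rw [← hrep, hw] at hcomm
        simp only [FreeGroup.lift_apply_of] at hcomm
        exact hcomm.symm
      exact key_move hδ four a b x (fun _ _ => True)
        (fun p q hp hq _ => hx p q hp hq) (fun e => ⟨trivial, trivial⟩)
        (mkBlocks L) (by rw [hM]; simp)
        (mkBlocks_spec L).1 (mkBlocks_spec L).2
        ((mkBlocks_spec L).2.imp fun _ _ _ => ⟨trivial, trivial⟩) hlift
  · rintro ⟨x, hx⟩
    have four : ∀ w x' y z : X,
        min (gromovProd w x' y) (gromovProd w y z) - δ ≤ gromovProd w x' z :=
      fun w x' y z => four_point hX w x' y z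
    intro w₁ w₂ h
    have h2 : ((FreeMonoid.toList w₁).map fun c => bif c then a else b).prod =
        ((FreeMonoid.toList w₂).map fun c => bif c then a else b).prod := by
      rw [← FreeMonoid.lift_apply, ← FreeMonoid.lift_apply]
      exact h
    have h3 := semigroup_list hδ four a b x hx _ _ h2
    exact FreeMonoid.toList.injective h3

/-- ping-pong criterion for freeness of the (semi)group generated by
two isometries of a δ-hyperbolic space. -/
theorem pingpong_freeness
    {X : Type*} [MetricSpace X] (δ : ℝ) (hδ : 0 < δ) (hX : IsDeltaHyperbolic X δ)
    (a b : X ≃ᵢ X) :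
    ((∃ x : X, ∀ p q : ℤ, p ≠ 0 → q ≠ 0 →
        max (dist x ((a ^ p) x)) (dist x ((b ^ q) x)) + 2 * δ < dist ((a ^ p) x) ((b ^ q) x)) →
      FreeGroupPair a b) ∧
    ((∃ x : X, ∀ p q : ℤ, p ≠ 0 → q ≠ 0 → ¬ (p < 0 ∧ q < 0) →
        max (dist x ((a ^ p) x)) (dist x ((b ^ q) x)) + 2 * δ < dist ((a ^ p) x) ((b ^ q) x)) →
      FreeSemigroupPair a b) := by
  obtain ⟨h1, h2⟩ := pingpong_freeness' δ hδ hX a b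
  exact ⟨fun h => h1 h, fun h => h2 h⟩
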